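/- Let W, Z be real normed vector spaces and B : E →L[ℝ] W →L[ℝ] Z a continuous bilinear map. Let e, f : Fin n → E be bases of E and let e', f' : Fin n → E be their reciprocal families, i.e. ⟪e μ, e' ν⟫ = δ_μ^ν and ⟪f μ, f' ν⟫ = δ_μ^ν for all μ, ν. Then for every continuous linear map L : E →L[ℝ] W, ∑_{μ} B (e' μ) (L (e μ)) = ∑_{μ} B (f' μ) (L (f μ)). (Taking L = fderiv ℝ X p, this says the Hestenes derivative ∂₀∗X := e^μ ∗ (e_μ·∂₀X) of a smooth multivector field X does not depend on the choice of the pair of reciprocal frame fields.) -/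

import Mathlib

open RealInnerProductSpace

lemma recip_expand {n : ℕ} (g g' : Fin n → EuclideanSpace ℝ (Fin n))
    (hg : ∀ μ ν, ⟪g μ, g' ν⟫ = if μ = ν then (1 : ℝ) else 0)
    (x : EuclideanSpace ℝ (Fin n)) :
    ∑ μ : Fin n, ⟪x, g μ⟫ • g' μ = x := by
  rcases Nat.eq_zero_or_pos n with hn | hn
  · subst hn
    have : Subsingleton (EuclideanSpace ℝ (Fin 0)) := by
      constructor; intro a b; ext i; exact absurd i.2 (by omega)
    exact Subsingleton.elim _ x
  have : Nonempty (Fin n) := ⟨⟨0, hn⟩⟩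
  have hli : LinearIndependent ℝ g' := by
    rw [Fintype.linearIndependent_iff]
    intro c hc μ
    have := congrArg (fun y => ⟪g μ, y⟫) hc
    simp only [inner_sum, real_inner_smul_right, hg, inner_zero_right] at this
    simpa using this
  have hcard : Fintype.card (Fin n) = Module.finrank ℝ (EuclideanSpace ℝ (Fin n)) := by
    simp
  let b := basisOfLinearIndependentOfCardEqFinrank hli hcard
  have hb : ∀ μ, b μ = g' μ := fun μ => by
    simp [b, coe_basisOfLinearIndependentOfCardEqFinrank]
  let T : EuclideanSpace ℝ (Fin n) →ₗ[ℝ] EuclideanSpace ℝ (Fin n) :=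
    { toFun := fun x => ∑ μ : Fin n, ⟪x, g μ⟫ • g' μ
      map_add' := by intro x y; simp [inner_add_left, add_smul, Finset.sum_add_distrib]
      map_smul' := by
        intro c x
        simp only [real_inner_smul_left, RingHom.id_apply, Finset.smul_sum, smul_smul]
      }
  have hT : T = LinearMap.id := by
    apply b.ext
    intro ν
    simp only [T, LinearMap.coe_mk, AddHom.coe_mk, LinearMap.id_coe, id_eq, hb]
    rw [Finset.sum_eq_single ν]
    · rw [real_inner_comm, hg]; simp
    · intro μ _ hμν
      rw [real_inner_comm, hg]; simp [hμν]
    · simp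
  exact congrFun (congrArg (fun (T : _ →ₗ[ℝ] _) => (T : _ → _)) hT) x

theorem stmt_7 {n : ℕ} {W Z : Type*}
    [NormedAddCommGroup W] [NormedSpace ℝ W]
    [NormedAddCommGroup Z] [NormedSpace ℝ Z]
    (B : EuclideanSpace ℝ (Fin n) →L[ℝ] W →L[ℝ] Z)
    (e f : Module.Basis (Fin n) ℝ (EuclideanSpace ℝ (Fin n)))
    (e' f' : Fin n → EuclideanSpace ℝ (Fin n))
    (he : ∀ μ ν, ⟪e μ, e' ν⟫ = if μ = ν then (1 : ℝ) else 0)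
    (hf : ∀ μ ν, ⟪f μ, f' ν⟫ = if μ = ν then (1 : ℝ) else 0)
    (L : EuclideanSpace ℝ (Fin n) →L[ℝ] W) :
    ∑ μ : Fin n, B (e' μ) (L (e μ)) = ∑ μ : Fin n, B (f' μ) (L (f μ)) := by
  have hf' : ∀ μ ν, ⟪f' μ, f ν⟫ = if μ = ν then (1 : ℝ) else 0 := by
    intro μ ν
    rw [real_inner_comm, hf]
    simp [eq_comm]
  calc ∑ μ : Fin n, B (e' μ) (L (e μ))
      = ∑ μ : Fin n, ∑ ν : Fin n, ⟪e μ, f' ν⟫ • B (e' μ) (L (f ν)) := by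
        refine Finset.sum_congr rfl fun μ _ => ?_
        conv_lhs => rw [← recip_expand f' f hf' (e μ)]
        simp only [map_sum, map_smul]
    _ = ∑ ν : Fin n, B (∑ μ : Fin n, ⟪f' ν, e μ⟫ • e' μ) (L (f ν)) := by
        rw [Finset.sum_comm]
        refine Finset.sum_congr rfl fun ν _ => ?_
        simp only [map_sum, map_smul, ContinuousLinearMap.coe_sum',
          ContinuousLinearMap.coe_smul', Finset.sum_apply, Pi.smul_apply,
          ContinuousLinearMap.smul_apply]
        exact Finset.sum_congr rfl fun μ _ => by rw [real_inner_comm]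
    _ = ∑ ν : Fin n, B (f' ν) (L (f ν)) := by
        refine Finset.sum_congr rfl fun ν _ => ?_
        rw [recip_expand e e' he (f' ν)]
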